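/- Every arc (v,w) of a strongly connected digraph G with at least two vertices has a good arc: an arc (a,b) with b ≠ w such that (i) for every vertex u ≠ w, G∖(a,b) has a path from u to v, and (ii) for every vertex u, either G∖(a,b) has a path from w to u, or G has a path from w to u containing (a,b) in which every vertex on the subpath from b to u has in-degree one in G. -/

import Mathlib

open Relation

section toolkit
variable {α : Type*} {r : α → α → Prop}

private lemma get?_zero' (l : List α) : l[0]? = l.head? := by cases l <;> rfl

private lemma chain'_reach : ∀ (l : List α) (x y : α), l.Chain' r → l.head? = some x →
    l.getLast? = some y → Relation.ReflTransGen r x y := by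
  intro l
  induction l with
  | nil => intro x y _ h; simp at h
  | cons u t ih =>
    intro x y hc hh hl
    have hux : u = x := by simpa using hh
    subst hux
    cases t with
    | nil =>
      have : u = y := by simpa using hl
      exact this ▸ Relation.ReflTransGen.refl
    | cons z t' =>
      simp only [List.Chain', List.isChain_cons_cons] at hc
      rw [List.getLast?_cons_cons] at hl
      exact Relation.ReflTransGen.head hc.1 (ih z y hc.2 rfl hl)

private lemma reach_chain' {x y : α} (h : Relation.ReflTransGen r x y) :
    ∃ l : List α, l.Chain' r ∧ l.Nodup ∧ l.head? = some x ∧ l.getLast? = some y ∧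
      ∀ z ∈ l, Relation.ReflTransGen r x z := by
  induction h with
  | refl =>
    refine ⟨[x], List.isChain_singleton x, by simp, rfl, rfl, ?_⟩
    intro z hz
    simp only [List.mem_singleton] at hz
    subst hz; exact Relation.ReflTransGen.refl
  | @tail p q hxp hpq ih =>
    obtain ⟨l, hc, hnd, hh, hl, hall⟩ := ih
    by_cases hq : q ∈ l
    · obtain ⟨s, t, rfl⟩ := List.append_of_mem hq
      have hpre : (s ++ [q]) <+: (s ++ q :: t) := ⟨t, by simp⟩
      refine ⟨s ++ [q], hc.prefix hpre, hpre.sublist.nodup hnd, ?_, List.getLast?_concat, ?_⟩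
      · cases s with
        | nil => simpa using hh
        | cons s0 s1 => simpa using hh
      · intro z hz
        refine hall z ?_
        rcases List.mem_append.mp hz with h | h
        · exact List.mem_append.mpr (Or.inl h)
        · simp only [List.mem_singleton] at h
          subst h; exact List.mem_append.mpr (Or.inr (List.mem_cons_self))
    · refine ⟨l ++ [q], ?_, ?_, ?_, List.getLast?_concat, ?_⟩
      · refine hc.append (by simp) ?_
        intro a ha b hb
        simp only [List.head?_cons, Option.mem_def, Option.some.injEq] at hb
        rw [hl] at ha
        simp only [Option.mem_def, Option.some.injEq] at ha
        subst ha; subst hb; exact hpq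
      · simp [List.nodup_append, hnd, hq]
        intro a ha h; subst h; exact hq ha
      · cases l with
        | nil => simp at hh
        | cons l0 l1 => simpa using hh
      · intro z hz
        rcases List.mem_append.mp hz with h | h
        · exact hall z h
        · simp only [List.mem_singleton] at h
          subst h; exact hxp.tail hpq

private lemma chain'_tail_ne {x : α} : ∀ (l : List α), l.Chain' r → x ∉ l →
    l.Chain' (fun p q => r p q ∧ p ≠ x) := by
  intro l
  induction l with
  | nil => intro _ _; exact List.isChain_nil
  | cons u t ih =>
    intro hc hx
    cases t with
    | nil => exact List.isChain_singleton _
    | cons z t' =>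
      simp only [List.Chain', List.isChain_cons_cons] at hc ⊢
      refine ⟨⟨hc.1, ?_⟩, ih hc.2 (fun h => hx (List.mem_cons_of_mem _ h))⟩
      rintro rfl
      exact hx (List.mem_cons_self)

private lemma chain'_ne_last {a : α} : ∀ (l : List α), l.Chain' r → l.Nodup → l.getLast? = some a →
    l.Chain' (fun p q => r p q ∧ p ≠ a) := by
  intro l
  induction l with
  | nil => intro _ _ _; exact List.isChain_nil
  | cons u t ih =>
    intro hc hnd hl
    cases t with
    | nil => exact List.isChain_singleton _
    | cons z t' =>
      rw [List.getLast?_cons_cons] at hl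
      have ha : a ∈ z :: t' := by
        rw [List.getLast?_eq_getElem?] at hl
        exact List.mem_of_getElem? hl
      simp only [List.Chain', List.isChain_cons_cons] at hc ⊢
      refine ⟨⟨hc.1, ?_⟩, ih hc.2 (List.nodup_cons.mp hnd).2 hl⟩
      rintro rfl
      exact (List.nodup_cons.mp hnd).1 ha


private lemma lemA {n : ℕ} {adj : Fin n → Fin n → Prop} {v x y : Fin n}
    (hx : Relation.ReflTransGen (fun p q => adj p q ∧ ¬(p = x ∧ q = y)) x v) :
    ∀ u, Relation.ReflTransGen adj u v →
      Relation.ReflTransGen (fun p q => adj p q ∧ ¬(p = x ∧ q = y)) u v := by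
  intro u hu
  induction hu using Relation.ReflTransGen.head_induction_on with
  | refl => exact Relation.ReflTransGen.refl
  | head h' h ih =>
    rename_i p c
    by_cases hpc : p = x ∧ c = y
    · exact hpc.1 ▸ hx
    · exact Relation.ReflTransGen.head ⟨h', hpc⟩ ih
open Classical in
private noncomputable def reachSet {n : ℕ} (adj : Fin n → Fin n → Prop) (v : Fin n) :
    ℕ → Finset (Fin n)
  | 0 => {v}
  | k+1 => reachSet adj v k ∪
      Finset.univ.filter (fun u => ∃ y ∈ reachSet adj v k, adj u y)

/-- every arc `(v,w)` of a strongly connected digraph with at least two vertices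
has a good arc `(a,b)`: `b ≠ w`, from every `u ≠ w` one can reach `v` avoiding `(a,b)`, and
every `u` is reachable from `w` either avoiding `(a,b)`, or along a path containing `(a,b)`
all of whose vertices from `b` onward have in-degree one. -/
theorem stmt11 (n : ℕ) (adj : Fin n → Fin n → Prop) [DecidableRel adj]
    (hn : 2 ≤ n) (hstrong : ∀ u v, Relation.ReflTransGen adj u v)
    (v w : Fin n) (hvw : adj v w) :
    ∃ a b, adj a b ∧ b ≠ w ∧
      (∀ u, u ≠ w →
        Relation.ReflTransGen (fun p q => adj p q ∧ ¬(p = a ∧ q = b)) u v) ∧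
      (∀ u,
        Relation.ReflTransGen (fun p q => adj p q ∧ ¬(p = a ∧ q = b)) w u ∨
        ∃ P : List (Fin n), P.Chain' adj ∧ P.Nodup ∧
          P.head? = some w ∧ P.getLast? = some u ∧
          ∃ k : ℕ, P[k]? = some a ∧ P[k + 1]? = some b ∧
            ∀ m, k + 1 ≤ m → ∀ x, P[m]? = some x →
              (Finset.univ.filter (fun j => adj j x)).card = 1) := by
  classical
  -- distance machinery
  have hex : ∀ u : Fin n, ∃ k, u ∈ reachSet adj v k := by
    intro u
    have hu : Relation.ReflTransGen adj u v := hstrong u v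
    induction hu using Relation.ReflTransGen.head_induction_on with
    | refl => exact ⟨0, by simp [reachSet]⟩
    | head h' h ih =>
      rename_i p c
      obtain ⟨k, hk⟩ := ih
      refine ⟨k+1, ?_⟩
      simp only [reachSet, Finset.mem_union, Finset.mem_filter, Finset.mem_univ, true_and]
      exact Or.inr ⟨c, hk, h'⟩
  have dstep : ∀ u : Fin n, u ≠ v → ∃ q, adj u q ∧ Nat.find (hex q) < Nat.find (hex u) := by
    intro u hu
    have h1 : u ∈ reachSet adj v (Nat.find (hex u)) := Nat.find_spec (hex u)
    cases hk : Nat.find (hex u) with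
    | zero =>
      rw [hk] at h1
      simp only [reachSet, Finset.mem_singleton] at h1
      exact absurd h1 hu
    | succ m =>
      rw [hk] at h1
      simp only [reachSet, Finset.mem_union, Finset.mem_filter, Finset.mem_univ, true_and] at h1
      have hnot : u ∉ reachSet adj v m := by
        intro hm
        have := Nat.find_min' (hex u) hm
        omega
      rcases h1 with h1 | h1
      · exact absurd h1 hnot
      · obtain ⟨y, hy, hady⟩ := h1
        refine ⟨y, hady, lt_of_le_of_lt (Nat.find_min' (hex y) hy) (by omega)⟩
  -- Φ : safe arcs
  have hPhiNe : (Finset.univ.filter (fun e : Fin n × Fin n => adj e.1 e.2 ∧ e.2 ≠ w ∧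
      ∀ u, u ≠ w → Relation.ReflTransGen
        (fun p q => adj p q ∧ ¬(p = e.1 ∧ q = e.2)) u v)).Nonempty := by
    by_cases hcase : ∃ x y, adj x y ∧ y ≠ w ∧ Nat.find (hex x) ≤ Nat.find (hex y)
    · obtain ⟨x, y, hxy, hyw, hle⟩ := hcase
      have hdesc : ∀ u : Fin n, Relation.ReflTransGen
          (fun p q => adj p q ∧ Nat.find (hex q) < Nat.find (hex p)) u v := by
        intro u
        have H : ∀ m (u : Fin n), Nat.find (hex u) < m → Relation.ReflTransGen
            (fun p q => adj p q ∧ Nat.find (hex q) < Nat.find (hex p)) u v := by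
          intro m
          induction m with
          | zero => intro u h; omega
          | succ m ih =>
            intro u h
            by_cases hv : u = v
            · subst hv; exact Relation.ReflTransGen.refl
            · obtain ⟨q, ha, hlt⟩ := dstep u hv
              exact Relation.ReflTransGen.head ⟨ha, hlt⟩ (ih q (by omega))
        exact H (Nat.find (hex u) + 1) u (by omega)
      have hx : Relation.ReflTransGen (fun p q => adj p q ∧ ¬(p = x ∧ q = y)) x v := by
        refine Relation.ReflTransGen.mono ?_ _ _ (hdesc x)
        rintro p q ⟨h1, h2⟩
        refine ⟨h1, ?_⟩
        rintro ⟨rfl, rfl⟩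
        omega
      refine ⟨(x, y), Finset.mem_filter.mpr ⟨Finset.mem_univ _, hxy, hyw, ?_⟩⟩
      exact fun u _ => lemA hx u (hstrong u v)
    · push_neg at hcase
      have hw : ∀ x, Relation.ReflTransGen adj w x →
          x = w ∨ Nat.find (hex x) < Nat.find (hex w) := by
        intro x hx
        induction hx with
        | refl => exact Or.inl rfl
        | @tail p q h1 h2 ih =>
          by_cases hq : q = w
          · exact Or.inl hq
          · have h3 := hcase p q h2 hq
            rcases ih with rfl | ih
            · exact Or.inr h3
            · exact Or.inr (by omega)
      have hy : ∃ y, adj w y ∧ y ≠ w := by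
        by_contra hcon
        push_neg at hcon
        have hall : ∀ x, Relation.ReflTransGen adj w x → x = w := by
          intro x hx
          induction hx with
          | refl => rfl
          | @tail p q h1 h2 ih =>
            subst ih
            exact hcon q h2
        obtain ⟨x, hx⟩ := Fintype.exists_ne_of_one_lt_card (by simp; omega) w
        exact hx (hall x (hstrong w x))
      obtain ⟨y, hwy, hyw⟩ := hy
      refine ⟨(w, y), Finset.mem_filter.mpr ⟨Finset.mem_univ _, hwy, hyw, ?_⟩⟩
      intro u hu
      have hdu : Nat.find (hex u) < Nat.find (hex w) := (hw u (hstrong w u)).resolve_left hu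
      have H : ∀ m (u : Fin n), Nat.find (hex u) < m → Nat.find (hex u) < Nat.find (hex w) →
          Relation.ReflTransGen (fun p q => adj p q ∧ ¬(p = (w, y).1 ∧ q = (w, y).2)) u v := by
        intro m
        induction m with
        | zero => intro u h _; omega
        | succ m ih =>
          intro u h hdw
          by_cases hv : u = v
          · exact hv ▸ Relation.ReflTransGen.refl
          · obtain ⟨q, ha, hlt⟩ := dstep u hv
            refine Relation.ReflTransGen.head ⟨ha, ?_⟩ (ih q (by omega) (by omega))
            rintro ⟨rfl, rfl⟩
            omega
      exact H (Nat.find (hex u) + 1) u (by omega) hdu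
  obtain ⟨e, heP, hmin⟩ := Finset.exists_min_image _
    (fun e : Fin n × Fin n => (Finset.univ.filter (fun t => ¬ Relation.ReflTransGen
      (fun p q => adj p q ∧ ¬(p = e.1 ∧ q = e.2)) w t)).card) hPhiNe
  obtain ⟨a, b⟩ := e
  obtain ⟨-, hab, hbw, hsafe⟩ :
      (a, b) ∈ Finset.univ ∧ adj a b ∧ b ≠ w ∧ ∀ u, u ≠ w → Relation.ReflTransGen
        (fun p q => adj p q ∧ ¬(p = a ∧ q = b)) u v := by
    simpa using Finset.mem_filter.mp heP
  refine ⟨a, b, hab, hbw, hsafe, ?_⟩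
  have hfill : Relation.ReflTransGen (fun p q => adj p q ∧ ¬(p = a ∧ q = b)) w b →
      ∀ z, Relation.ReflTransGen adj w z →
        Relation.ReflTransGen (fun p q => adj p q ∧ ¬(p = a ∧ q = b)) w z := by
    intro hb z hz
    induction hz with
    | refl => exact Relation.ReflTransGen.refl
    | @tail p q h1 h2 ih =>
      by_cases hpq : p = a ∧ q = b
      · rw [hpq.2]; exact hb
      · exact ih.tail ⟨h2, hpq⟩
  have haU : Relation.ReflTransGen (fun p q => adj p q ∧ ¬(p = a ∧ q = b)) w a := by
    obtain ⟨l, hc, hnd, hh, hl, -⟩ := reach_chain' (hstrong w a)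
    refine chain'_reach l w a ((chain'_ne_last l hc hnd hl).imp ?_) hh hl
    rintro p q ⟨h1, h2⟩
    exact ⟨h1, fun hh => h2 hh.1⟩
  have hUL4 : ∀ z, Relation.ReflTransGen adj w z →
      ¬Relation.ReflTransGen (fun p q => adj p q ∧ ¬(p = a ∧ q = b)) w z →
      Relation.ReflTransGen (fun p q => adj p q ∧
        (¬Relation.ReflTransGen (fun p' q' => adj p' q' ∧ ¬(p' = a ∧ q' = b)) w p) ∧
        (¬Relation.ReflTransGen (fun p' q' => adj p' q' ∧ ¬(p' = a ∧ q' = b)) w q)) b z := by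
    intro z hz
    induction hz with
    | refl => intro h; exact absurd Relation.ReflTransGen.refl h
    | @tail p q h1 h2 ih =>
      intro hqU
      by_cases hpq : p = a ∧ q = b
      · rw [hpq.2]
      · have hpU : ¬ Relation.ReflTransGen (fun p q => adj p q ∧ ¬(p = a ∧ q = b)) w p :=
          fun hp => hqU (hp.tail ⟨h2, hpq⟩)
        exact (ih hpU).tail ⟨h2, hpU, hqU⟩
  have hindeg : ∀ x, ¬Relation.ReflTransGen (fun p q => adj p q ∧ ¬(p = a ∧ q = b)) w x →
      (Finset.univ.filter (fun j => adj j x)).card = 1 := by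
    by_contra hcon
    rw [not_forall] at hcon
    obtain ⟨z, hz2⟩ := hcon
    rw [_root_.not_imp] at hz2
    obtain ⟨hzU, hzcard⟩ := hz2
    have hzw : z ≠ w := fun h => hzU (by rw [h])
    have hlastarc : ∀ z' : Fin n, Relation.ReflTransGen adj w z' → z' = w ∨ ∃ p, adj p z' := by
      intro z' hz'
      induction hz' with
      | refl => exact Or.inl rfl
      | @tail p q h1 h2 ih => exact Or.inr ⟨p, h2⟩
    have hz1 : ∃ p, adj p z := (hlastarc z (hstrong w z)).resolve_left hzw
    have hge2 : 1 < (Finset.univ.filter (fun j => adj j z)).card := by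
      obtain ⟨p, hp⟩ := hz1
      have h0 : 0 < (Finset.univ.filter (fun j => adj j z)).card :=
        Finset.card_pos.mpr ⟨p, Finset.mem_filter.mpr ⟨Finset.mem_univ _, hp⟩⟩
      have h1 := hzcard
      omega
    obtain ⟨c, hc1, c', hc'1, hcc'⟩ := Finset.one_lt_card.mp hge2
    have hcz : adj c z := (Finset.mem_filter.mp hc1).2
    have hc'z : adj c' z := (Finset.mem_filter.mp hc'1).2
    have hbU : ¬Relation.ReflTransGen (fun p q => adj p q ∧ ¬(p = a ∧ q = b)) w b :=
      fun hb => hzU (hfill hb z (hstrong w z))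
    by_cases hgood : ∃ x y, (¬Relation.ReflTransGen (fun p q => adj p q ∧ ¬(p = a ∧ q = b)) w x) ∧
        adj x y ∧ y ≠ w ∧
        Relation.ReflTransGen (fun p q => adj p q ∧ ¬(p = x ∧ q = y)) x v
    · obtain ⟨x, y, hxU, hxy, hyw, hxv⟩ := hgood
      have hmem : (x, y) ∈ Finset.univ.filter (fun e : Fin n × Fin n => adj e.1 e.2 ∧ e.2 ≠ w ∧
          ∀ u, u ≠ w → Relation.ReflTransGen
            (fun p q => adj p q ∧ ¬(p = e.1 ∧ q = e.2)) u v) :=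
        Finset.mem_filter.mpr ⟨Finset.mem_univ _, hxy, hyw, fun u' _ => lemA hxv u' (hstrong u' v)⟩
      have hav : ∀ t, Relation.ReflTransGen (fun p q => adj p q ∧ ¬(p = a ∧ q = b)) w t →
          Relation.ReflTransGen (fun p q => adj p q ∧ ¬(p = x ∧ q = y)) w t := by
        intro t ht
        induction ht with
        | refl => exact Relation.ReflTransGen.refl
        | @tail p q h1 h2 ih =>
          refine ih.tail ⟨h2.1, ?_⟩
          rintro ⟨rfl, rfl⟩
          exact hxU h1
      have hbnew : Relation.ReflTransGen (fun p q => adj p q ∧ ¬(p = x ∧ q = y)) w b := by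
        refine (hav a haU).tail ⟨hab, ?_⟩
        rintro ⟨rfl, rfl⟩
        exact hxU haU
      have hsub : (Finset.univ.filter (fun t => ¬ Relation.ReflTransGen
            (fun p q => adj p q ∧ ¬(p = (x, y).1 ∧ q = (x, y).2)) w t)) ⊆
          (Finset.univ.filter (fun t => ¬ Relation.ReflTransGen
            (fun p q => adj p q ∧ ¬(p = (a, b).1 ∧ q = (a, b).2)) w t)) := by
        intro t ht
        simp only [Finset.mem_filter, Finset.mem_univ, true_and] at ht ⊢
        exact fun h => ht (hav t h)
      have hlt : (Finset.univ.filter (fun t => ¬ Relation.ReflTransGen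
            (fun p q => adj p q ∧ ¬(p = (x, y).1 ∧ q = (x, y).2)) w t)).card <
          (Finset.univ.filter (fun t => ¬ Relation.ReflTransGen
            (fun p q => adj p q ∧ ¬(p = (a, b).1 ∧ q = (a, b).2)) w t)).card := by
        refine Finset.card_lt_card ((Finset.ssubset_iff_of_subset hsub).mpr ⟨b, ?_, ?_⟩)
        · simp only [Finset.mem_filter, Finset.mem_univ, true_and]
          exact hbU
        · simp only [Finset.mem_filter, Finset.mem_univ, true_and, not_not]
          exact hbnew
      have hle := hmin (x, y) hmem
      simp only at hle hlt
      omega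
    · have hgood' : ∀ x y, ¬Relation.ReflTransGen (fun p q => adj p q ∧ ¬(p = a ∧ q = b)) w x →
          adj x y → y ≠ w →
          ¬ Relation.ReflTransGen (fun p q => adj p q ∧ ¬(p = x ∧ q = y)) x v :=
        fun x y h1 h2 h3 h4 => hgood ⟨x, y, h1, h2, h3, h4⟩
      have hB1 : ∀ y, ¬Relation.ReflTransGen (fun p q => adj p q ∧ ¬(p = a ∧ q = b)) w v →
          adj v y → y = w := by
        intro y hvU hy
        by_contra hyw
        exact hgood' v y hvU hy hyw Relation.ReflTransGen.refl
      have hFL : ∀ (l : List (Fin n)) (x y : Fin n),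
          l.Chain' (fun p q => adj p q ∧ ¬(p = a ∧ q = b)) →
          l.Nodup → l.head? = some x → l.getLast? = some v →
          ¬Relation.ReflTransGen (fun p q => adj p q ∧ ¬(p = a ∧ q = b)) w x →
          adj x y → y ≠ w → l[1]? = some y := by
        intro l x y hc hnd hh hl hxU hxy hyw
        cases l with
        | nil => simp at hh
        | cons x0 t =>
          have hx0 : x0 = x := by simpa using hh
          subst hx0
          cases t with
          | nil =>
            have hv0 : x0 = v := by simpa using hl
            subst hv0
            exact absurd (hB1 y hxU hxy) hyw
          | cons y' t' =>
            by_cases hy' : y' = y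
            · subst hy'; rfl
            · exfalso
              simp only [List.Chain', List.isChain_cons_cons] at hc
              rw [List.getLast?_cons_cons] at hl
              have hxnot : x0 ∉ y' :: t' := (List.nodup_cons.mp hnd).1
              have hc2 : (y' :: t').Chain' (fun p q => adj p q ∧ ¬(p = x0 ∧ q = y)) := by
                refine (chain'_tail_ne _ hc.2 hxnot).imp ?_
                rintro p q ⟨h1, h2⟩
                exact ⟨h1.1, fun hh => h2 hh.1⟩
              have hreach : Relation.ReflTransGen (fun p q => adj p q ∧ ¬(p = x0 ∧ q = y)) x0 v :=
                Relation.ReflTransGen.head ⟨hc.1.1, fun hh => hy' hh.2⟩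
                  (chain'_reach _ y' v hc2 rfl hl)
              exact hgood' x0 y hxU hxy hyw hreach
      have hbv : Relation.ReflTransGen (fun p q => adj p q ∧ ¬(p = a ∧ q = b)) b v := hsafe b hbw
      obtain ⟨P, hPc, hPnd, hPh, hPl, -⟩ := reach_chain' hbv
      have hsucc : ∀ (q : Fin n) (i : ℕ), P[i]? = some q →
          ¬Relation.ReflTransGen (fun p q => adj p q ∧ ¬(p = a ∧ q = b)) w q →
          ∀ y, adj q y → y ≠ w → P[i + 1]? = some y := by
        intro q i hqi hqU y hqy hyw
        have hhd : (P.drop i).head? = some q := by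
          rw [← get?_zero', List.getElem?_drop]
          simpa using hqi
        have hne : P.drop i ≠ [] := by
          intro h
          rw [h] at hhd
          simp at hhd
        have hlast : (P.drop i).getLast? = some v := by
          have h9 := hPl
          rw [← List.take_append_drop i P, List.getLast?_append] at h9
          cases hgl : (P.drop i).getLast? with
          | none => exact absurd (List.getLast?_eq_none_iff.mp hgl) hne
          | some d =>
            rw [hgl] at h9
            simpa using h9
        have h8 := hFL (P.drop i) q y (hPc.drop i) ((List.drop_sublist i P).nodup hPnd)
          hhd hlast hqU hqy hyw
        rwa [List.getElem?_drop] at h8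
      have hC4 : ∀ t, Relation.ReflTransGen (fun p q => adj p q ∧
          (¬Relation.ReflTransGen (fun p' q' => adj p' q' ∧ ¬(p' = a ∧ q' = b)) w p) ∧
          (¬Relation.ReflTransGen (fun p' q' => adj p' q' ∧ ¬(p' = a ∧ q' = b)) w q)) b t →
          ∃ i : ℕ, P[i]? = some t := by
        intro t ht
        induction ht with
        | refl => exact ⟨0, by rw [get?_zero']; exact hPh⟩
        | @tail p q h1 h2 ih =>
          obtain ⟨i, hi⟩ := ih
          have hqw : q ≠ w := fun h => h2.2.2 (by rw [h])
          exact ⟨i + 1, hsucc p i hi h2.2.1 q h2.1 hqw⟩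
      have hinU : ∀ p, adj p z → (p = a ∧ z = b) ∨
          ¬Relation.ReflTransGen (fun p' q' => adj p' q' ∧ ¬(p' = a ∧ q' = b)) w p := by
        intro p hp
        by_cases hpU : Relation.ReflTransGen (fun p' q' => adj p' q' ∧ ¬(p' = a ∧ q' = b)) w p
        · left
          by_contra hne
          exact hzU (hpU.tail ⟨hp, fun h9 => hne h9⟩)
        · exact Or.inr hpU
      have getidx : ∀ p, adj p z →
          ¬Relation.ReflTransGen (fun p' q' => adj p' q' ∧ ¬(p' = a ∧ q' = b)) w p →
          ∃ i : ℕ, P[i]? = some p ∧ P[i + 1]? = some z := by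
        intro p hp hpU
        obtain ⟨i, hi⟩ := hC4 p (hUL4 p (hstrong w p) hpU)
        exact ⟨i, hi, hsucc p i hi hpU z hp hzw⟩
      by_cases hzb : z = b
      · have hone : ∃ c0, adj c0 z ∧
            ¬Relation.ReflTransGen (fun p' q' => adj p' q' ∧ ¬(p' = a ∧ q' = b)) w c0 := by
          rcases hinU c hcz with ⟨rfl, -⟩ | h
          · rcases hinU c' hc'z with ⟨rfl, -⟩ | h'
            · exact absurd rfl hcc'
            · exact ⟨c', hc'z, h'⟩
          · exact ⟨c, hcz, h⟩
        obtain ⟨c0, hc0z, hc0U⟩ := hone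
        obtain ⟨i, -, hnext⟩ := getidx c0 hc0z hc0U
        have h0 : P[0]? = some z := by rw [get?_zero', hPh, hzb]
        have hlen : i + 1 < P.length := by
          by_contra hbig
          push_neg at hbig
          rw [List.getElem?_eq_none hbig] at hnext
          simp at hnext
        have h9 := (List.getElem?_inj hlen hPnd).mp (hnext.trans h0.symm)
        omega
      · have hcU : ¬Relation.ReflTransGen (fun p' q' => adj p' q' ∧ ¬(p' = a ∧ q' = b)) w c := by
          rcases hinU c hcz with ⟨-, h⟩ | h
          · exact absurd h hzb
          · exact h
        have hc'U : ¬Relation.ReflTransGen (fun p' q' => adj p' q' ∧ ¬(p' = a ∧ q' = b)) w c' := by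
          rcases hinU c' hc'z with ⟨-, h⟩ | h
          · exact absurd h hzb
          · exact h
        obtain ⟨i, hci, hnext⟩ := getidx c hcz hcU
        obtain ⟨i', hc'i, hnext'⟩ := getidx c' hc'z hc'U
        have hlen : i + 1 < P.length := by
          by_contra hbig
          push_neg at hbig
          rw [List.getElem?_eq_none hbig] at hnext
          simp at hnext
        have heq : i + 1 = i' + 1 := (List.getElem?_inj hlen hPnd).mp (hnext.trans hnext'.symm)
        have hii : i = i' := by omega
        subst hii
        rw [hci] at hc'i
        simp only [Option.some.injEq] at hc'i
        exact hcc' hc'i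
  intro u
  by_cases hu : Relation.ReflTransGen (fun p q => adj p q ∧ ¬(p = a ∧ q = b)) w u
  · exact Or.inl hu
  · right
    obtain ⟨l1, hc1, hnd1, hh1, hl1, hall1⟩ := reach_chain' haU
    obtain ⟨l2, hc2, hnd2, hh2, hl2, hall2⟩ := reach_chain' (hUL4 u (hstrong w u) hu)
    have hl2U : ∀ t ∈ l2, ¬Relation.ReflTransGen (fun p q => adj p q ∧ ¬(p = a ∧ q = b)) w t := by
      intro t htm
      have h2 := hall2 t htm
      rcases h2.cases_tail with h | ⟨c0, h3, hstep⟩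
      · rw [h]
        exact fun hb => hu (hfill hb u (hstrong w u))
      · exact hstep.2.2
    have hl1ne : l1 ≠ [] := by intro h; rw [h] at hh1; simp at hh1
    have hl2ne : l2 ≠ [] := by intro h; rw [h] at hh2; simp at hh2
    have hpos : 0 < l1.length := List.length_pos_iff.mpr hl1ne
    refine ⟨l1 ++ l2, ?_, ?_, ?_, ?_, l1.length - 1, ?_, ?_, ?_⟩
    · refine List.IsChain.append (hc1.imp ?_) (hc2.imp ?_) ?_
      · exact fun p q h => h.1
      · exact fun p q h => h.1
      · intro p hp q hq
        rw [hl1] at hp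
        rw [hh2] at hq
        simp only [Option.mem_def, Option.some.injEq] at hp hq
        subst hp; subst hq; exact hab
    · rw [List.nodup_append]
      refine ⟨hnd1, hnd2, ?_⟩
      intro t ht1 t' ht2 heq
      subst heq
      exact hl2U t ht2 (hall1 t ht1)
    · cases l1 with
      | nil => exact absurd rfl hl1ne
      | cons p t =>
        simp only [List.cons_append, List.head?_cons]
        simpa using hh1
    · rw [List.getLast?_append, hl2]
      rfl
    · rw [List.getElem?_append_left (by omega), ← List.getLast?_eq_getElem?]
      exact hl1
    · have hk1 : l1.length - 1 + 1 = l1.length := by omega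
      rw [hk1, List.getElem?_append_right (le_refl _), Nat.sub_self, get?_zero']
      exact hh2
    · intro m hm x hx
      have hm' : l1.length ≤ m := by omega
      rw [List.getElem?_append_right hm'] at hx
      exact hindeg x (hl2U x (List.mem_of_getElem? hx))
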